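/- Let n ≥ 2 and let P(z) = Tₙ(z − cos(π/(2n))), where Tₙ is the Chebyshev polynomial of the first kind of degree n. Write c₁ = P'(0) for the coefficient of z in P and cₙ = 2^{n−1} for its leading coefficient. Then every critical value of P has absolute value exactly equal to 2·((1/n)·sin(π/(2n)))^{n/(n−1)} · |c₁ⁿ/cₙ|^{1/(n−1)}; in particular the lower bound of Corollary 4 is sharp. -/

import Mathlib

open Polynomial Real

lemma abs_T_eval_of_crit (n : ℕ) (hn : n ≠ 0) (w : ℂ)
    (hU : (Polynomial.Chebyshev.U ℂ ((n : ℤ) - 1)).eval w = 0) :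
    ‖(Polynomial.Chebyshev.T ℂ n).eval w‖ = 1 := by
  obtain ⟨θ, hθ⟩ := Complex.cos_surjective w
  have hsin : Complex.sin ((n : ℂ) * θ) = 0 := by
    by_cases hsθ : Complex.sin θ = 0
    · obtain ⟨k, hk⟩ := Complex.sin_eq_zero_iff.mp hsθ
      subst hk
      have : (n : ℂ) * ((k : ℂ) * (π : ℂ)) = (((n : ℤ) * k : ℤ) : ℂ) * (π : ℂ) := by
        push_cast; ring
      rw [this, Complex.sin_int_mul_pi]
    · have h := Polynomial.Chebyshev.U_complex_cos θ ((n : ℤ) - 1)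
      rw [hθ, hU, zero_mul] at h
      have h2 : (((n : ℤ) - 1 : ℤ) + 1 : ℂ) * θ = (n : ℂ) * θ := by push_cast; ring
      rw [h2] at h
      exact h.symm
  have hT : (Polynomial.Chebyshev.T ℂ n).eval w = Complex.cos ((n : ℂ) * θ) := by
    rw [← hθ, Polynomial.Chebyshev.T_complex_cos]
    norm_num
  have hc2 : Complex.cos ((n : ℂ) * θ) ^ 2 = 1 := by
    have := Complex.sin_sq_add_cos_sq ((n : ℂ) * θ)
    rw [hsin] at this; linear_combination this
  have habs : ‖(Polynomial.Chebyshev.T ℂ n).eval w‖ ^ 2 = 1 := by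
    rw [hT, ← norm_pow, hc2, norm_one]
  nlinarith [norm_nonneg ((Polynomial.Chebyshev.T ℂ n).eval w)]

/-- Sharpness of Corollary 4: for `P(z) = Tₙ(z − cos(π/(2n)))`, with
`c₁ = P'(0)` and leading coefficient `cₙ = 2^{n−1}`, every critical value of `P`
has modulus exactly `2·((1/n)·sin(π/(2n)))^{n/(n−1)}·|c₁ⁿ/cₙ|^{1/(n−1)}`. -/
theorem critical_value_bound_sharp (n : ℕ) (hn : 2 ≤ n)
    (P : ℂ[X]) (hP : P = (Polynomial.Chebyshev.T ℂ n).comp (X - C ((Real.cos (π / (2 * n)) : ℝ) : ℂ)))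
    (c₁ : ℂ) (hc₁ : c₁ = P.derivative.eval 0) (cₙ : ℂ) (hcₙ : cₙ = 2 ^ (n - 1)) :
    ∀ ζ : ℂ, P.derivative.eval ζ = 0 →
      ‖P.eval ζ‖ =
        2 * ((1 / n) * Real.sin (π / (2 * n))) ^ ((n : ℝ) / ((n : ℝ) - 1)) *
          ‖c₁ ^ n / cₙ‖ ^ ((1 : ℝ) / ((n : ℝ) - 1)) := by
  intro ζ hζ
  have hn0 : (n : ℝ) ≠ 0 := by positivity
  have hnpos : 0 < (n : ℝ) := by positivity
  set a : ℂ := ((Real.cos (π / (2 * n)) : ℝ) : ℂ) with ha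
  -- derivative of P
  have hderiv : P.derivative = ((Polynomial.Chebyshev.T ℂ n).derivative).comp (X - C a) := by
    rw [hP, derivative_comp]
    simp
  have hevald : ∀ z : ℂ, P.derivative.eval z
      = (n : ℂ) * (Polynomial.Chebyshev.U ℂ ((n : ℤ) - 1)).eval (z - a) := by
    intro z
    rw [hderiv, eval_comp, Polynomial.Chebyshev.T_derivative_eq_U]
    simp
  -- LHS = 1
  have hUζ : (Polynomial.Chebyshev.U ℂ ((n : ℤ) - 1)).eval (ζ - a) = 0 := by
    have := hζ
    rw [hevald ζ] at this
    rcases mul_eq_zero.mp this with h | h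
    · exact absurd h (by exact_mod_cast hn0)
    · exact h
  have hLHS : ‖P.eval ζ‖ = 1 := by
    rw [hP, eval_comp]
    simp only [eval_sub, eval_X, eval_C]
    exact abs_T_eval_of_crit n (by omega) _ hUζ
  -- compute |c₁|
  set s : ℝ := Real.sin (π / (2 * n)) with hs
  have hθpos : 0 < π / (2 * n) := by positivity
  have hθlt : π / (2 * n) < π := by
    rw [div_lt_iff₀ (by positivity)]
    nlinarith [pi_pos, (show (2:ℝ) ≤ n by exact_mod_cast hn)]
  have hspos : 0 < s := Real.sin_pos_of_pos_of_lt_pi hθpos hθlt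
  set φ : ℝ := π - π / (2 * n) with hφ
  have hcosφ : ((Real.cos φ : ℝ) : ℂ) = -a := by
    rw [hφ, Real.cos_pi_sub, ha]; push_cast; ring
  have hsinφ : Real.sin φ = s := by rw [hφ, Real.sin_pi_sub]
  have hnφ : (n : ℝ) * φ = n * π - π / 2 := by
    rw [hφ]; field_simp
  have hcosnφ : Real.cos ((n : ℝ) * φ) = 0 := by
    rw [hnφ, Real.cos_sub, Real.cos_pi_div_two, Real.sin_pi_div_two, Real.sin_nat_mul_pi]
    ring
  have hsinnφ : |Real.sin ((n : ℝ) * φ)| = 1 := by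
    have h := Real.sin_sq_add_cos_sq ((n : ℝ) * φ)
    rw [hcosnφ] at h
    have : Real.sin ((n : ℝ) * φ) ^ 2 = 1 := by linarith
    nlinarith [abs_nonneg (Real.sin ((n : ℝ) * φ)), sq_abs (Real.sin ((n : ℝ) * φ))]
  have hUeval : (Polynomial.Chebyshev.U ℂ ((n : ℤ) - 1)).eval (-a) * (Real.sin φ : ℂ)
      = ((Real.sin ((n : ℝ) * φ) : ℝ) : ℂ) := by
    have h := Polynomial.Chebyshev.U_complex_cos (φ : ℂ) ((n : ℤ) - 1)
    rw [← Complex.ofReal_cos, hcosφ, ← Complex.ofReal_sin] at h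
    rw [h, show ((((n : ℤ) - 1 : ℤ) : ℂ) + 1) * (φ : ℂ) = (((n : ℝ) * φ : ℝ) : ℂ) from by
      push_cast; ring]
    exact (Complex.ofReal_sin _).symm
  have hc₁val : c₁ * (s : ℂ) = (n : ℂ) * ((Real.sin ((n : ℝ) * φ) : ℝ) : ℂ) := by
    rw [hc₁, hevald 0, zero_sub, mul_assoc, ← hsinφ]
    rw [hUeval]
  have habs_c₁ : ‖c₁‖ = n / s := by
    have := congrArg (‖·‖) hc₁val
    rw [norm_mul, norm_mul] at this
    simp only [Complex.norm_real, Real.norm_eq_abs, Complex.norm_natCast] at this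
    rw [hsinnφ, abs_of_pos hspos] at this
    field_simp at this ⊢
    linarith
  -- compute the RHS
  have habs_cₙ : ‖cₙ‖ = 2 ^ (n - 1) := by
    rw [hcₙ, norm_pow, Complex.norm_two]
  have habsdiv : ‖c₁ ^ n / cₙ‖ = ((n : ℝ) / s) ^ n / 2 ^ (n - 1) := by
    rw [norm_div, norm_pow, habs_c₁, habs_cₙ]
  set m : ℝ := (n : ℝ) - 1 with hm
  have hmpos : 0 < m := by
    have : (2:ℝ) ≤ n := by exact_mod_cast hn
    simp only [hm]; linarith
  have hm_cast : ((n - 1 : ℕ) : ℝ) = m := by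
    have : (1:ℕ) ≤ n := by omega
    push_cast [this]; ring
  have hrpow1 : (((n : ℝ) / s) ^ n : ℝ) ^ ((1:ℝ) / m) = ((n : ℝ) / s) ^ ((n : ℝ) / m) := by
    rw [← Real.rpow_natCast ((n : ℝ) / s) n, ← Real.rpow_mul (by positivity)]
    congr 1
    field_simp
  have hrpow2 : ((2 : ℝ) ^ (n - 1) : ℝ) ^ ((1:ℝ) / m) = 2 := by
    rw [← Real.rpow_natCast (2:ℝ) (n - 1), ← Real.rpow_mul (by norm_num), hm_cast]
    rw [mul_one_div, div_self (ne_of_gt hmpos), Real.rpow_one]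
  have hRHS : ‖c₁ ^ n / cₙ‖ ^ ((1 : ℝ) / m)
      = ((n : ℝ) / s) ^ ((n : ℝ) / m) / 2 := by
    rw [habsdiv, Real.div_rpow (by positivity) (by positivity), hrpow1, hrpow2]
  have hmul : (s / (n:ℝ)) ^ ((n:ℝ) / m) * (((n:ℝ) / s) ^ ((n:ℝ) / m)) = 1 := by
    rw [← Real.mul_rpow (by positivity) (by positivity),
      show (s / (n:ℝ)) * ((n:ℝ) / s) = 1 from by field_simp, Real.one_rpow]
  rw [hLHS, hRHS, show (1 / (n:ℝ)) * s = s / n from by ring]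
  linear_combination -hmul
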